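/- Let γ : ℤ → ℂ satisfy γ(0) = 1, γ(−k) = conj(γ(k)) for all k ∈ ℤ, and |γ(k)| ≤ 1 for all k ∈ ℤ. Define G(z) = Σ_{k=1}^{∞} conj(γ(k)) z^k for |z| < 1. Then for all z, w in the open unit disk 𝔻 = {z ∈ ℂ : |z| < 1}, the double series Σ_{k=0}^{∞} Σ_{l=0}^{∞} γ(l − k) z^k conj(w)^l converges absolutely and equals (1 + G(z) + conj(G(w))) / (1 − z·conj(w)). -/

import Mathlib

open Complex

/-- Equiv onto the upper part `{p | p.1 ≤ p.2}` of `ℕ × ℕ`. -/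
def eUp : ℕ × ℕ ≃ {p : ℕ × ℕ // p.1 ≤ p.2} where
  toFun q := ⟨(q.1, q.1 + q.2), Nat.le_add_right _ _⟩
  invFun p := (p.1.1, p.1.2 - p.1.1)
  left_inv q := by simp
  right_inv p := by
    rcases p with ⟨⟨k, l⟩, h⟩
    simp only [Set.mem_setOf_eq] at h
    simp only [Subtype.mk.injEq, Prod.mk.injEq, true_and, and_true]
    omega

/-- Equiv onto the strictly lower part `{p | ¬ p.1 ≤ p.2}` of `ℕ × ℕ`. -/
def eLo : ℕ × ℕ ≃ {p : ℕ × ℕ // ¬ p.1 ≤ p.2} where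
  toFun q := ⟨(q.1 + q.2 + 1, q.1), by omega⟩
  invFun p := (p.1.2, p.1.1 - p.1.2 - 1)
  left_inv q := by
    refine Prod.ext rfl ?_
    show q.1 + q.2 + 1 - q.1 - 1 = q.2
    omega
  right_inv p := by
    rcases p with ⟨⟨k, l⟩, h⟩
    simp only [Set.mem_setOf_eq] at h
    simp only [Subtype.mk.injEq, Prod.mk.injEq, true_and, and_true]
    omega

/-- For a normalized covariance function `γ`, the covariance kernel
of the associated GAF factorizes through the Szegő kernel:
`Σ_{k,l≥0} γ(l-k) z^k conj(w)^l = (1 + G(z) + conj(G(w))) / (1 - z conj(w))`,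
the double series converging absolutely. -/
theorem stmt_1 (γ : ℤ → ℂ) (h0 : γ 0 = 1)
    (hsym : ∀ k : ℤ, γ (-k) = (starRingEnd ℂ) (γ k))
    (hbd : ∀ k : ℤ, ‖γ k‖ ≤ 1)
    (G : ℂ → ℂ)
    (hG : ∀ z : ℂ, ‖z‖ < 1 →
      G z = ∑' k : ℕ, (starRingEnd ℂ) (γ ((k : ℤ) + 1)) * z ^ (k + 1))
    (z w : ℂ) (hz : ‖z‖ < 1) (hw : ‖w‖ < 1) :
    Summable (fun p : ℕ × ℕ =>
      ‖γ ((p.2 : ℤ) - (p.1 : ℤ)) * z ^ p.1 * ((starRingEnd ℂ) w) ^ p.2‖) ∧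
    ∑' p : ℕ × ℕ, γ ((p.2 : ℤ) - (p.1 : ℤ)) * z ^ p.1 * ((starRingEnd ℂ) w) ^ p.2
      = (1 + G z + (starRingEnd ℂ) (G w)) / (1 - z * (starRingEnd ℂ) w) := by
  set v : ℂ := (starRingEnd ℂ) w with hv_def
  have hv : ‖v‖ < 1 := by rwa [hv_def, RCLike.norm_conj]
  set q : ℂ := z * v with hq_def
  have hq : ‖q‖ < 1 := by
    calc ‖q‖ = ‖z‖ * ‖v‖ := norm_mul z v
    _ ≤ ‖z‖ * 1 := by gcongr
    _ = ‖z‖ := mul_one _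
    _ < 1 := hz
  have hq1 : (1 : ℂ) - q ≠ 0 := by
    intro h
    have : (1:ℂ) = q := by linear_combination h
    rw [← this] at hq; simp at hq
  set F : ℕ × ℕ → ℂ :=
    fun p => γ ((p.2 : ℤ) - (p.1 : ℤ)) * z ^ p.1 * v ^ p.2 with hF_def
  -- summability of norms
  have hN : Summable fun p : ℕ × ℕ => ‖F p‖ := by
    have hb : Summable fun p : ℕ × ℕ => ‖z‖ ^ p.1 * ‖v‖ ^ p.2 :=
      (summable_geometric_of_lt_one (norm_nonneg z) hz).mul_of_nonneg
        (summable_geometric_of_lt_one (norm_nonneg v) hv)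
        (fun k => pow_nonneg (norm_nonneg z) k)
        (fun l => pow_nonneg (norm_nonneg v) l)
    refine Summable.of_nonneg_of_le (fun p => norm_nonneg _) (fun p => ?_) hb
    calc ‖F p‖ = ‖γ ((p.2 : ℤ) - (p.1 : ℤ))‖ * ‖z‖ ^ p.1 * ‖v‖ ^ p.2 := by
          simp [hF_def, norm_mul, norm_pow]
    _ ≤ 1 * ‖z‖ ^ p.1 * ‖v‖ ^ p.2 := by
          gcongr <;> first | positivity | exact hbd _
    _ = ‖z‖ ^ p.1 * ‖v‖ ^ p.2 := by ring
  have hF : Summable F := hN.of_norm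
  refine ⟨hN, ?_⟩
  -- geometric sum
  have hgeo : ∑' k : ℕ, q ^ k = (1 - q)⁻¹ := tsum_geometric_of_norm_lt_one hq
  have hgeoS : Summable fun k : ℕ => ‖q ^ k‖ := by
    simpa [norm_pow] using summable_geometric_of_lt_one (norm_nonneg q) hq
  -- the diagonal-and-above part
  have hAnorm : Summable fun d : ℕ => ‖γ (d : ℤ) * v ^ d‖ := by
    refine Summable.of_nonneg_of_le (fun d => norm_nonneg _) (fun d => ?_)
      (summable_geometric_of_lt_one (norm_nonneg v) hv)
    calc ‖γ (d : ℤ) * v ^ d‖ = ‖γ (d : ℤ)‖ * ‖v‖ ^ d := by simp [norm_mul, norm_pow]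
    _ ≤ 1 * ‖v‖ ^ d := by gcongr <;> first | positivity | exact hbd _
    _ = ‖v‖ ^ d := one_mul _
  have hBnorm : Summable fun m : ℕ =>
      ‖(starRingEnd ℂ) (γ ((m : ℤ) + 1)) * z ^ (m + 1)‖ := by
    refine Summable.of_nonneg_of_le (fun m => norm_nonneg _) (fun m => ?_)
      ((summable_geometric_of_lt_one (norm_nonneg z) hz).comp_injective
        (add_right_injective 1))
    calc ‖(starRingEnd ℂ) (γ ((m : ℤ) + 1)) * z ^ (m + 1)‖
        = ‖γ ((m : ℤ) + 1)‖ * ‖z‖ ^ (m + 1) := by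
          simp [norm_mul, norm_pow, RCLike.norm_conj]
    _ ≤ 1 * ‖z‖ ^ (m + 1) := by gcongr <;> first | positivity | exact hbd _
    _ = ‖z‖ ^ (1 + m) := by rw [one_mul, add_comm]
    _ = ((fun k : ℕ => ‖z‖ ^ k) ∘ fun m => 1 + m) m := rfl
  -- upper part
  have hUp : ∑' p : {p : ℕ × ℕ // p.1 ≤ p.2}, F p
      = (1 - q)⁻¹ * ∑' d : ℕ, γ (d : ℤ) * v ^ d := by
    rw [← eUp.tsum_eq]
    have : ∀ p : ℕ × ℕ, F (eUp p) = q ^ p.1 * (γ (p.2 : ℤ) * v ^ p.2) := by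
      intro ⟨k, d⟩
      show γ (((k + d : ℕ) : ℤ) - (k : ℤ)) * z ^ k * v ^ (k + d)
          = q ^ k * (γ (d : ℤ) * v ^ d)
      have : ((k + d : ℕ) : ℤ) - (k : ℤ) = (d : ℤ) := by push_cast; ring
      rw [this, hq_def, mul_pow, pow_add]; ring
    rw [tsum_congr this, ← tsum_mul_tsum_of_summable_norm hgeoS hAnorm, hgeo]
  -- strictly lower part
  have hLo : ∑' p : {p : ℕ × ℕ // ¬ p.1 ≤ p.2}, F p
      = (1 - q)⁻¹ * ∑' m : ℕ, (starRingEnd ℂ) (γ ((m : ℤ) + 1)) * z ^ (m + 1) := by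
    rw [← eLo.tsum_eq]
    have : ∀ p : ℕ × ℕ, F (eLo p)
        = q ^ p.1 * ((starRingEnd ℂ) (γ ((p.2 : ℤ) + 1)) * z ^ (p.2 + 1)) := by
      intro ⟨l, m⟩
      show γ ((l : ℤ) - ((l + m + 1 : ℕ) : ℤ)) * z ^ (l + m + 1) * v ^ l
          = q ^ l * ((starRingEnd ℂ) (γ ((m : ℤ) + 1)) * z ^ (m + 1))
      have h1 : (l : ℤ) - ((l + m + 1 : ℕ) : ℤ) = -((m : ℤ) + 1) := by push_cast; ring
      rw [h1, hsym, hq_def, mul_pow]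
      rw [show l + m + 1 = l + (m + 1) by ring, pow_add]
      ring
    rw [tsum_congr this, ← tsum_mul_tsum_of_summable_norm hgeoS hBnorm, hgeo]
  -- identify the two series with G z and conj (G w)
  have hGz : ∑' m : ℕ, (starRingEnd ℂ) (γ ((m : ℤ) + 1)) * z ^ (m + 1) = G z :=
    (hG z hz).symm
  have hGw : ∑' d : ℕ, γ (d : ℤ) * v ^ d = 1 + (starRingEnd ℂ) (G w) := by
    have hsum : Summable fun d : ℕ => γ (d : ℤ) * v ^ d := hAnorm.of_norm
    rw [Summable.tsum_eq_zero_add hsum]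
    have h1 : γ ((0 : ℕ) : ℤ) * v ^ 0 = 1 := by simp [h0]
    rw [h1]
    congr 1
    have : (starRingEnd ℂ) (G w)
        = ∑' k : ℕ, γ ((k : ℤ) + 1) * v ^ (k + 1) := by
      rw [hG w hw]
      rw [show ((starRingEnd ℂ) : ℂ → ℂ) = star from rfl, tsum_star]
      refine tsum_congr fun k => ?_
      simp [star_mul', star_pow, hv_def]
    rw [this]
    refine tsum_congr fun d => ?_
    push_cast
    ring
  -- assemble
  have hsplit := Summable.tsum_subtype_add_tsum_subtype_compl hF {p : ℕ × ℕ | p.1 ≤ p.2}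
  have hcompl : ∑' p : ↑({p : ℕ × ℕ | p.1 ≤ p.2}ᶜ), F p
      = ∑' p : {p : ℕ × ℕ // ¬ p.1 ≤ p.2}, F p := rfl
  calc ∑' p : ℕ × ℕ, F p
      = ∑' p : {p : ℕ × ℕ // p.1 ≤ p.2}, F p
        + ∑' p : {p : ℕ × ℕ // ¬ p.1 ≤ p.2}, F p := by
        rw [← hsplit, hcompl]; rfl
  _ = (1 - q)⁻¹ * (1 + (starRingEnd ℂ) (G w)) + (1 - q)⁻¹ * G z := by
        rw [hUp, hLo, hGz, hGw]
  _ = (1 + G z + (starRingEnd ℂ) (G w)) / (1 - q) := by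
        field_simp
        ring
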